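/- Let V, Q be Hilbert spaces, A ∈ L(V, V*) elliptic on V_ker := ker B, and B ∈ L(V, Q*) satisfying the inf-sup condition with constant β > 0. Then for every g ∈ Q* the saddle point problem A x + B* ν = 0 in V*, B x = g in Q*, has a unique solution (x, ν) ∈ V × Q, and moreover x lies in the complement space V_c := { v ∈ V : ⟨A v, w⟩ = 0 for all w ∈ V_ker }. -/

import Mathlib

open InnerProductSpace RealInnerProductSpace

set_option maxHeartbeats 1000000

/-- The Riesz lift of the "adjoint" of `B`: `⟪rieszLift B q, v⟫ = B v q`. -/
noncomputable def rieszLift {V Q : Type*} [NormedAddCommGroup V] [InnerProductSpace ℝ V]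
    [CompleteSpace V] [NormedAddCommGroup Q] [InnerProductSpace ℝ Q]
    (B : V →L[ℝ] (Q →L[ℝ] ℝ)) : Q →L[ℝ] V where
  toFun q := (InnerProductSpace.toDual ℝ V).symm (B.flip q)
  map_add' p q := by simp
  map_smul' r q := by simp
  cont := (InnerProductSpace.toDual ℝ V).symm.continuous.comp B.flip.continuous

@[simp] lemma inner_rieszLift {V Q : Type*} [NormedAddCommGroup V] [InnerProductSpace ℝ V]
    [CompleteSpace V] [NormedAddCommGroup Q] [InnerProductSpace ℝ Q]
    (B : V →L[ℝ] (Q →L[ℝ] ℝ)) (q : Q) (v : V) :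
    ⟪rieszLift B q, v⟫_ℝ = B v q := by
  simp [rieszLift, InnerProductSpace.toDual_symm_apply]

theorem saddle_point_unique_solvability
    {V Q : Type*} [NormedAddCommGroup V] [InnerProductSpace ℝ V] [CompleteSpace V]
    [NormedAddCommGroup Q] [InnerProductSpace ℝ Q] [CompleteSpace Q]
    (a : V →L[ℝ] V →L[ℝ] ℝ)              -- the form of A ∈ L(V, V*)
    (B : V →L[ℝ] (Q →L[ℝ] ℝ))            -- B ∈ L(V, Q*)
    (μ β : ℝ) (hμ : 0 < μ) (hβ : 0 < β)
    (hell : ∀ v : V, (∀ q : Q, B v q = 0) → μ * ‖v‖ ^ 2 ≤ a v v)  -- A elliptic on ker B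
    (hinfsup : ∀ q : Q, β * ‖q‖ ≤ ⨆ v : {v : V // v ≠ 0}, B v q / ‖(v : V)‖) :
    ∀ g : Q →L[ℝ] ℝ,
      (∃! p : V × Q,
        (∀ v : V, a p.1 v + B v p.2 = 0) ∧ (∀ q : Q, B p.1 q = g q)) ∧
      (∀ p : V × Q,
        ((∀ v : V, a p.1 v + B v p.2 = 0) ∧ (∀ q : Q, B p.1 q = g q)) →
        ∀ w : V, (∀ q : Q, B w q = 0) → a p.1 w = 0) := by
  classical
  set T := rieszLift B with hT
  -- lower bound for T from the inf-sup condition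
  have hlow : ∀ q : Q, β * ‖q‖ ≤ ‖T q‖ := by
    intro q
    refine (hinfsup q).trans (Real.iSup_le ?_ (norm_nonneg _))
    rintro ⟨v, hv⟩
    have hvpos : (0:ℝ) < ‖v‖ := norm_pos_iff.mpr hv
    rw [div_le_iff₀ hvpos]
    calc B v q = ⟪T q, v⟫_ℝ := (inner_rieszLift B q v).symm
      _ ≤ ‖T q‖ * ‖v‖ := real_inner_le_norm _ _
  have hTinj : ∀ q : Q, T q = 0 → q = 0 := by
    intro q hq
    have := hlow q
    rw [hq, norm_zero] at this
    have : ‖q‖ ≤ 0 := by nlinarith [norm_nonneg q]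
    simpa using le_antisymm this (norm_nonneg q)
  -- the coercive form c on Q
  set c : Q →L[ℝ] Q →L[ℝ] ℝ := B.comp T with hc
  have hcapp : ∀ p q : Q, c p q = ⟪T q, T p⟫_ℝ := by
    intro p q
    simp only [hc, ContinuousLinearMap.comp_apply, hT]
    exact (inner_rieszLift B q (rieszLift B p)).symm
  have ccoer : IsCoercive c := by
    refine ⟨β * β, mul_pos hβ hβ, fun q => ?_⟩
    have h1 : β * ‖q‖ * (β * ‖q‖) ≤ ‖T q‖ * ‖T q‖ :=
      mul_le_mul (hlow q) (hlow q) (by positivity) (norm_nonneg _)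
    have h2 : ⟪T q, T q⟫_ℝ = ‖T q‖ * ‖T q‖ := real_inner_self_eq_norm_mul_norm _
    rw [hcapp q q, h2]
    nlinarith
  set eC := ccoer.continuousLinearEquivOfBilin with heC
  -- the kernel K of B
  set K : Submodule ℝ V := LinearMap.ker (B : V →ₗ[ℝ] (Q →L[ℝ] ℝ)) with hKdef
  have hKmem : ∀ v : V, v ∈ K ↔ ∀ q : Q, B v q = 0 := by
    intro v
    constructor
    · intro h q
      have : B v = 0 := h
      simp [this]
    · intro h
      have : B v = 0 := by ext q; simpa using h q
      exact this
  haveI : CompleteSpace K := (ContinuousLinearMap.isClosed_ker B).completeSpace_coe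
  -- a restricted to K
  set aK : K →L[ℝ] K →L[ℝ] ℝ := ((a.comp K.subtypeL).flip.comp K.subtypeL).flip with haK
  have haKapp : ∀ u w : K, aK u w = a (u : V) (w : V) := by
    intro u w
    simp only [haK, ContinuousLinearMap.flip_apply, ContinuousLinearMap.comp_apply,
      Submodule.subtypeL_apply]
  have acoer : IsCoercive aK := by
    refine ⟨μ, hμ, fun u => ?_⟩
    have hu : ∀ q : Q, B (u : V) q = 0 := (hKmem _).mp u.2
    have h0 := hell (u : V) hu
    rw [haKapp u u]
    rw [Submodule.coe_norm u]
    nlinarith [h0]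
  set eA := acoer.continuousLinearEquivOfBilin with heA
  intro g
  -- second part: trivial from the first equation
  have part2 : ∀ p : V × Q,
      ((∀ v : V, a p.1 v + B v p.2 = 0) ∧ (∀ q : Q, B p.1 q = g q)) →
      ∀ w : V, (∀ q : Q, B w q = 0) → a p.1 w = 0 := by
    rintro p ⟨h1, _⟩ w hw
    have := h1 w
    rw [hw p.2] at this
    linarith
  refine ⟨?_, part2⟩
  -- existence
  -- Step 1: x_g with B x_g = g
  set pg : Q := eC.symm ((InnerProductSpace.toDual ℝ Q).symm g) with hpg
  set xg : V := T pg with hxg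
  have hBxg : ∀ q : Q, B xg q = g q := by
    intro q
    have h1 : c pg q = ⟪eC pg, q⟫_ℝ := (ccoer.continuousLinearEquivOfBilin_apply pg q).symm
    have h2 : eC pg = (InnerProductSpace.toDual ℝ Q).symm g := by
      rw [hpg]; exact eC.apply_symm_apply _
    have : c pg q = g q := by rw [h1, h2, InnerProductSpace.toDual_symm_apply]
    simpa [hc] using this
  -- Step 2: correction on the kernel
  set ℓK : K →L[ℝ] ℝ := (-(a xg)).comp K.subtypeL with hℓK
  set x0 : K := eA.symm ((InnerProductSpace.toDual ℝ K).symm ℓK) with hx0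
  have hax0 : ∀ w : K, a (x0 : V) (w : V) = -(a xg (w : V)) := by
    intro w
    have h1 : aK x0 w = ⟪eA x0, w⟫_ℝ := (acoer.continuousLinearEquivOfBilin_apply x0 w).symm
    have h2 : eA x0 = (InnerProductSpace.toDual ℝ K).symm ℓK := by
      rw [hx0]; exact eA.apply_symm_apply _
    have h3 : aK x0 w = ℓK w := by rw [h1, h2, InnerProductSpace.toDual_symm_apply]
    rw [← haKapp x0 w, h3, hℓK]
    simp
  set x : V := xg + (x0 : V) with hx
  have hBx : ∀ q : Q, B x q = g q := by
    intro q
    have h0 : B (x0 : V) q = 0 := (hKmem _).mp x0.2 q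
    simp [hx, hBxg q, h0]
  have haxK : ∀ w : V, w ∈ K → a x w = 0 := by
    intro w hw
    have := hax0 ⟨w, hw⟩
    simp only [hx, map_add]
    simp only [ContinuousLinearMap.add_apply]
    rw [this]; ring
  -- Step 3: the multiplier ν
  set r : V := (InnerProductSpace.toDual ℝ V).symm (-(a x)) with hr
  have hrv : ∀ v : V, ⟪r, v⟫_ℝ = -(a x v) := by
    intro v; rw [hr, InnerProductSpace.toDual_symm_apply]; simp
  set ℓQ : Q →L[ℝ] ℝ := ((innerSL ℝ) r).comp T with hℓQ
  set ν : Q := eC.symm ((InnerProductSpace.toDual ℝ Q).symm ℓQ) with hν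
  have hcν : ∀ q : Q, c ν q = ⟪r, T q⟫_ℝ := by
    intro q
    have h1 : c ν q = ⟪eC ν, q⟫_ℝ := (ccoer.continuousLinearEquivOfBilin_apply ν q).symm
    have h2 : eC ν = (InnerProductSpace.toDual ℝ Q).symm ℓQ := by
      rw [hν]; exact eC.apply_symm_apply _
    rw [h1, h2, InnerProductSpace.toDual_symm_apply]
    simp [hℓQ]
  set d : V := T ν - r with hd
  have hdT : ∀ q : Q, ⟪d, T q⟫_ℝ = 0 := by
    intro q
    have h1 : c ν q = ⟪T q, T ν⟫_ℝ := hcapp ν q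
    have h2 := hcν q
    rw [h1] at h2
    rw [hd, inner_sub_left, real_inner_comm (T ν) (T q)] at *
    rw [h2]; ring
  have hdK : d ∈ K := by
    rw [hKmem]
    intro q
    have := hdT q
    rw [real_inner_comm] at this
    rw [← inner_rieszLift B q d]
    exact this
  have hd0 : d = 0 := by
    have h1 : ⟪d, d⟫_ℝ = ⟪T ν, d⟫_ℝ - ⟪r, d⟫_ℝ := by rw [hd, inner_sub_left]
    have h2 : ⟪T ν, d⟫_ℝ = B d ν := inner_rieszLift B ν d
    have h3 : B d ν = 0 := (hKmem d).mp hdK ν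
    have h4 : ⟪r, d⟫_ℝ = -(a x d) := hrv d
    have h5 : a x d = 0 := haxK d hdK
    have : ⟪d, d⟫_ℝ = 0 := by rw [h1, h2, h3, h4, h5]; ring
    exact inner_self_eq_zero.mp this
  have hTν : T ν = r := by
    have h := hd0
    rw [hd] at h
    exact sub_eq_zero.mp h
  have hBν : ∀ v : V, a x v + B v ν = 0 := by
    intro v
    have h1 : B v ν = ⟪T ν, v⟫_ℝ := (inner_rieszLift B ν v).symm
    rw [h1, hTν, hrv v]; ring
  -- now assemble existence and uniqueness
  clear_value d ν r x x0 xg pg eA eC aK c T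
  refine ⟨(x, ν), ⟨hBν, hBx⟩, ?_⟩
  rintro ⟨y, η⟩ ⟨h1, h2⟩
  -- uniqueness
  have hdiff : ∀ v : V, a (y - x) v + B v (η - ν) = 0 := by
    intro v
    have := h1 v
    have h2' := hBν v
    simp only [map_sub, ContinuousLinearMap.sub_apply]
    linarith
  have hker : (y - x) ∈ K := by
    rw [hKmem]
    intro q
    have := h2 q
    have h2' := hBx q
    simp only [map_sub, ContinuousLinearMap.sub_apply]
    linarith
  have hy : y = x := by
    have hB0 : B (y - x) (η - ν) = 0 := (hKmem _).mp hker _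
    have h3 := hdiff (y - x)
    rw [hB0] at h3
    have h4 := hell (y - x) ((hKmem _).mp hker)
    have h5 : a (y - x) (y - x) = 0 := by linarith
    have h6 : μ * ‖y - x‖ ^ 2 ≤ 0 := by linarith
    have h6' : ‖y - x‖ ^ 2 ≤ 0 := by
      have h10 : μ * ‖y - x‖ ^ 2 ≤ μ * 0 := by rw [mul_zero]; exact h6
      exact (mul_le_mul_iff_of_pos_left hμ).mp h10
    have h7 : ‖y - x‖ = 0 := by
      have h9 : ‖y - x‖ ^ 2 = 0 := le_antisymm h6' (sq_nonneg _)
      exact pow_eq_zero_iff two_ne_zero |>.mp h9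
    have h8 := norm_eq_zero.mp h7
    exact sub_eq_zero.mp h8
  have hη : η = ν := by
    have hB0 : ∀ v : V, B v (η - ν) = 0 := by
      intro v
      have := hdiff v
      rw [hy] at this
      simp only [sub_self, map_zero, ContinuousLinearMap.zero_apply] at this ⊢
      linarith
    have hT0 : T (η - ν) = 0 := by
      have : ∀ v : V, ⟪T (η - ν), v⟫_ℝ = 0 := by
        intro v; rw [hT, inner_rieszLift]; exact hB0 v
      exact inner_self_eq_zero.mp (this _)
    have := hTinj _ hT0
    exact sub_eq_zero.mp this
  rw [Prod.ext_iff]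
  exact ⟨hy, hη⟩
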